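/- Let K be a field and define a K-automorphism ρ of K(v₁, v₂) (rational functions in two variables) by ρ(v₁) = v₂ and ρ(v₂) = -1/(v₁v₂). Then ρ has order 3, and with w₁ = 1/(1 - v₁ + v₁v₂), w₂ = -v₁/(1 - v₁ + v₁v₂), one has K(v₁, v₂) = K(w₁, w₂) and ρ(w₁) = w₂, ρ(w₂) = -w₁ - w₂ + 1. -/

import Mathlib

/-- The fixed points of a `K`-algebra automorphism form an intermediate field. -/
def fixedIF {K F : Type*} [Field K] [Field F] [Algebra K F] (σ : F ≃ₐ[K] F) :
    IntermediateField K F where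
  carrier := {x | σ x = x}
  mul_mem' := fun {a b} ha hb => by simp only [Set.mem_setOf_eq, map_mul] at *; rw [ha, hb]
  one_mem' := map_one σ
  add_mem' := fun {a b} ha hb => by simp only [Set.mem_setOf_eq, map_add] at *; rw [ha, hb]
  zero_mem' := map_zero σ
  algebraMap_mem' := σ.commutes
  inv_mem' := fun a ha => by simp only [Set.mem_setOf_eq, map_inv₀] at *; rw [ha]

/-- Let `K` be a field and `ρ` the `K`-automorphism of `K(v₁,v₂)` with
`ρ(v₁) = v₂`, `ρ(v₂) = -1/(v₁v₂)`. Then `ρ` has order 3, and with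
`w₁ = 1/(1 - v₁ + v₁v₂)`, `w₂ = -v₁/(1 - v₁ + v₁v₂)`, one has `K(v₁,v₂) = K(w₁,w₂)`,
`ρ(w₁) = w₂` and `ρ(w₂) = -w₁ - w₂ + 1`. -/
theorem stmt12 (K F : Type*) [Field K] [Field F] [Algebra K F]
    (v₁ v₂ : F) (hind : AlgebraicIndependent K ![v₁, v₂])
    (hgen : IntermediateField.adjoin K {v₁, v₂} = ⊤)
    (ρ : F ≃ₐ[K] F) (h1 : ρ v₁ = v₂) (h2 : ρ v₂ = -1 / (v₁ * v₂))
    (w₁ w₂ : F)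
    (hw1 : w₁ = 1 / (1 - v₁ + v₁ * v₂))
    (hw2 : w₂ = -v₁ / (1 - v₁ + v₁ * v₂)) :
    orderOf ρ = 3 ∧ IntermediateField.adjoin K {w₁, w₂} = ⊤ ∧
      ρ w₁ = w₂ ∧ ρ w₂ = -w₁ - w₂ + 1 := by
  have hv1 : v₁ ≠ 0 := by simpa using hind.ne_zero 0
  have hv2 : v₂ ≠ 0 := by simpa using hind.ne_zero 1
  have haeinj : Function.Injective (MvPolynomial.aeval (R := K) ![v₁, v₂]) :=
    algebraicIndependent_iff_injective_aeval.mp hind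
  -- d = 1 - v₁ + v₁ v₂ is nonzero
  set d : F := 1 - v₁ + v₁ * v₂ with hd_def
  have haev : (MvPolynomial.aeval ![v₁, v₂])
      (1 - MvPolynomial.X 0 + MvPolynomial.X 0 * MvPolynomial.X 1 : MvPolynomial (Fin 2) K) = d := by
    simp [hd_def]
  have hd : d ≠ 0 := by
    intro h
    have h0 : (1 - MvPolynomial.X 0 + MvPolynomial.X 0 * MvPolynomial.X 1 :
        MvPolynomial (Fin 2) K) = 0 := by
      apply haeinj
      rw [haev, h, map_zero]
    have := congrArg MvPolynomial.constantCoeff h0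
    simp at this
  have hne : v₁ ≠ v₂ := by
    intro h
    have : (0 : Fin 2) = 1 := hind.injective (by simpa using h)
    simp at this
  -- images of d, w₁, w₂ under ρ
  have hρd : ρ d = -d / v₁ := by
    rw [hd_def]
    rw [map_add, map_sub, map_one, map_mul, h1, h2]
    field_simp
    ring
  have hrw1 : ρ w₁ = w₂ := by
    rw [hw1, map_div₀, map_one, hρd, hw2]
    rw [one_div_div, div_neg, neg_div]
  have hrw2 : ρ w₂ = -w₁ - w₂ + 1 := by
    rw [hw2, map_div₀, map_neg, h1, hρd, hw1]
    field_simp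
    ring
  refine ⟨?_, ?_, hrw1, hrw2⟩
  · -- order of ρ is 3
    have hpow : ∀ x : F, (ρ ^ 3) x = ρ (ρ (ρ x)) := fun x => by
      rw [pow_succ, pow_succ, pow_one]; rfl
    have hr3 : ρ (-1 / (v₁ * v₂)) = v₁ := by
      rw [map_div₀, map_neg, map_one, map_mul, h1, h2]
      field_simp
    have key1 : (ρ ^ 3) v₁ = v₁ := by rw [hpow, h1, h2, hr3]
    have key2 : (ρ ^ 3) v₂ = v₂ := by rw [hpow, h2, hr3, h1]
    have h3 : ρ ^ 3 = 1 := by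
      have hle : IntermediateField.adjoin K {v₁, v₂} ≤ fixedIF (ρ ^ 3) := by
        rw [IntermediateField.adjoin_le_iff]
        rintro x (rfl | rfl)
        · exact key1
        · exact key2
      ext x
      have : x ∈ fixedIF (ρ ^ 3) := hle (hgen ▸ IntermediateField.mem_top)
      exact this
    have hne1 : ρ ≠ 1 := by
      intro h
      apply hne
      rw [← h1, h]; rfl
    haveI : Fact (Nat.Prime 3) := ⟨by norm_num⟩
    exact orderOf_eq_prime h3 hne1
  · -- adjoin K {w₁, w₂} = ⊤
    have hw1ne : w₁ ≠ 0 := by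
      rw [hw1]
      exact div_ne_zero one_ne_zero hd
    have hmem1 : w₁ ∈ IntermediateField.adjoin K {w₁, w₂} :=
      IntermediateField.subset_adjoin K _ (Or.inl rfl)
    have hmem2 : w₂ ∈ IntermediateField.adjoin K {w₁, w₂} :=
      IntermediateField.subset_adjoin K _ (Or.inr rfl)
    have hv1eq : v₁ = -(w₂ * w₁⁻¹) := by
      rw [hw1, hw2]
      field_simp
    have hv1mem : v₁ ∈ IntermediateField.adjoin K {w₁, w₂} := by
      rw [hv1eq]
      exact neg_mem (mul_mem hmem2 (inv_mem hmem1))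
    have hv2eq : v₂ = (w₁⁻¹ - 1 + v₁) * v₁⁻¹ := by
      have hdw : d = w₁⁻¹ := by rw [hw1]; field_simp
      rw [← hdw, hd_def]
      field_simp
      ring
    have hv2mem : v₂ ∈ IntermediateField.adjoin K {w₁, w₂} := by
      rw [hv2eq]
      exact mul_mem (add_mem (sub_mem (inv_mem hmem1) (one_mem _)) hv1mem) (inv_mem hv1mem)
    rw [eq_top_iff, ← hgen, IntermediateField.adjoin_le_iff]
    rintro x (rfl | rfl)
    · exact hv1mem
    · exact hv2mem
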